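/- Let 0 < x < 1 and let X_{s,t} = ((1-x³)(1-x^{s+1})(1-x^{t+1})(1-x^{s+t+3}))/((1-x)(1-x^{s+3})(1-x^{t+3})(1-x^{s+t+1})) and R_s = ((1+4x+x²)/(1+x+x²))·((1-x^s)(1-x^{s+3}))/((1-x^{s+1})(1-x^{s+2})), with g = x(1+x+x²)/(1+4x+x²)². Then for all integers s, t ≥ 0, X_{s,t} = 1 + g·R_s·R_t·X_{s,t}·(1 + g·R_{s+1}·R_{t+1}·X_{s+1,t+1}). -/

import Mathlib

set_option maxHeartbeats 1000000

/-- with 0 < x < 1, the explicit X_{s,t} and R_s satisfy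
X_{s,t} = 1 + g·R_s·R_t·X_{s,t}·(1 + g·R_{s+1}·R_{t+1}·X_{s+1,t+1}). -/

theorem stmt_1 (x : ℝ) (hx0 : 0 < x) (hx1 : x < 1)
    (g : ℝ) (hg : g = x * (1 + x + x ^ 2) / (1 + 4 * x + x ^ 2) ^ 2)
    (R : ℕ → ℝ)
    (hR : ∀ s : ℕ, R s = (1 + 4 * x + x ^ 2) / (1 + x + x ^ 2) *
      ((1 - x ^ s) * (1 - x ^ (s + 3))) / ((1 - x ^ (s + 1)) * (1 - x ^ (s + 2))))
    (X : ℕ → ℕ → ℝ)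
    (hX : ∀ s t : ℕ, X s t =
      (1 - x ^ 3) * (1 - x ^ (s + 1)) * (1 - x ^ (t + 1)) * (1 - x ^ (s + t + 3)) /
      ((1 - x) * (1 - x ^ (s + 3)) * (1 - x ^ (t + 3)) * (1 - x ^ (s + t + 1)))) :
    ∀ s t : ℕ, X s t =
      1 + g * R s * R t * X s t * (1 + g * R (s + 1) * R (t + 1) * X (s + 1) (t + 1)) := by
  intro s t
  have hne : ∀ n : ℕ, (1 : ℝ) - x ^ (n + 1) ≠ 0 := fun n =>
    ne_of_gt (sub_pos.mpr (pow_lt_one₀ hx0.le hx1 (Nat.succ_ne_zero n)))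
  have hx : (1 : ℝ) - x ≠ 0 := ne_of_gt (sub_pos.mpr hx1)
  have hq : (1 : ℝ) + x + x ^ 2 ≠ 0 := by positivity
  have hp : (1 : ℝ) + 4 * x + x ^ 2 ≠ 0 := by positivity
  have ds1 : (1 : ℝ) - x ^ s * x ≠ 0 := by
    have := hne s; rwa [show x ^ (s + 1) = x ^ s * x by ring] at this
  have ds2 : (1 : ℝ) - x ^ s * x ^ 2 ≠ 0 := by
    have := hne (s + 1); rwa [show x ^ (s + 1 + 1) = x ^ s * x ^ 2 by ring] at this
  have ds3 : (1 : ℝ) - x ^ s * x ^ 3 ≠ 0 := by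
    have := hne (s + 2); rwa [show x ^ (s + 2 + 1) = x ^ s * x ^ 3 by ring] at this
  have ds4 : (1 : ℝ) - x ^ s * x * x ≠ 0 := by
    have := hne (s + 1); rwa [show x ^ (s + 1 + 1) = x ^ s * x * x by ring] at this
  have ds5 : (1 : ℝ) - x ^ s * x * x ^ 2 ≠ 0 := by
    have := hne (s + 2); rwa [show x ^ (s + 2 + 1) = x ^ s * x * x ^ 2 by ring] at this
  have ds6 : (1 : ℝ) - x ^ s * x * x ^ 3 ≠ 0 := by
    have := hne (s + 3); rwa [show x ^ (s + 3 + 1) = x ^ s * x * x ^ 3 by ring] at this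
  have dt1 : (1 : ℝ) - x ^ t * x ≠ 0 := by
    have := hne t; rwa [show x ^ (t + 1) = x ^ t * x by ring] at this
  have dt2 : (1 : ℝ) - x ^ t * x ^ 2 ≠ 0 := by
    have := hne (t + 1); rwa [show x ^ (t + 1 + 1) = x ^ t * x ^ 2 by ring] at this
  have dt3 : (1 : ℝ) - x ^ t * x ^ 3 ≠ 0 := by
    have := hne (t + 2); rwa [show x ^ (t + 2 + 1) = x ^ t * x ^ 3 by ring] at this
  have dt4 : (1 : ℝ) - x ^ t * x * x ≠ 0 := by
    have := hne (t + 1); rwa [show x ^ (t + 1 + 1) = x ^ t * x * x by ring] at this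
  have dt5 : (1 : ℝ) - x ^ t * x * x ^ 2 ≠ 0 := by
    have := hne (t + 2); rwa [show x ^ (t + 2 + 1) = x ^ t * x * x ^ 2 by ring] at this
  have dt6 : (1 : ℝ) - x ^ t * x * x ^ 3 ≠ 0 := by
    have := hne (t + 3); rwa [show x ^ (t + 3 + 1) = x ^ t * x * x ^ 3 by ring] at this
  have dst1 : (1 : ℝ) - x ^ s * x ^ t * x ≠ 0 := by
    have := hne (s + t); rwa [show x ^ (s + t + 1) = x ^ s * x ^ t * x by ring] at this
  have dst2 : (1 : ℝ) - x ^ s * x * (x ^ t * x) * x ≠ 0 := by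
    have := hne (s + t + 2)
    rwa [show x ^ (s + t + 2 + 1) = x ^ s * x * (x ^ t * x) * x by ring] at this
  have dst3 : (1 : ℝ) - x ^ s * x ^ t * x ^ 3 ≠ 0 := by
    have := hne (s + t + 2)
    rwa [show x ^ (s + t + 2 + 1) = x ^ s * x ^ t * x ^ 3 by ring] at this
  have e1 : ∀ k n : ℕ, 0 < k → (1 : ℝ) - x ^ k * x ^ n ≠ 0 := fun k n hk => by
    rw [← pow_add]; obtain ⟨m, hm⟩ : ∃ m, k + n = m + 1 := ⟨k + n - 1, by omega⟩
    rw [hm]; exact hne m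
  have e2 : ∀ k m n : ℕ, 0 < k → (1 : ℝ) - x ^ k * x ^ m * x ^ n ≠ 0 := fun k m n hk => by
    rw [mul_assoc, ← pow_add]; exact e1 k (m + n) hk
  have f1 := e1 1 s (by norm_num); have f2 := e1 2 s (by norm_num)
  have f3 := e1 3 s (by norm_num); have f4 := e1 4 s (by norm_num)
  have f5 := e1 5 s (by norm_num); have g1 := e1 1 t (by norm_num)
  have g2 := e1 2 t (by norm_num); have g3 := e1 3 t (by norm_num)
  have g4 := e1 4 t (by norm_num); have g5 := e1 5 t (by norm_num)
  have h1 := e2 1 s t (by norm_num); have h2 := e2 2 s t (by norm_num)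
  have h3 := e2 3 s t (by norm_num); have h4 := e2 4 s t (by norm_num)
  have h5 := e2 5 s t (by norm_num)
  have h1' : (1 : ℝ) - x * x ^ s * x ^ t ≠ 0 := by simpa using h1
  have f1' : (1 : ℝ) - x * x ^ s ≠ 0 := by simpa using f1
  have g1' : (1 : ℝ) - x * x ^ t ≠ 0 := by simpa using g1
  have inner : 1 + g * R (s + 1) * R (t + 1) * X (s + 1) (t + 1) =
      (1 + x) * (1 - x ^ s * x ^ 2) * (1 - x ^ t * x ^ 2) * (1 - x ^ s * x ^ t * x ^ 4) /
        ((1 - x ^ s * x ^ 3) * (1 - x ^ t * x ^ 3) * (1 - x ^ s * x ^ t * x ^ 3)) := by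
    have dst4 : (1 : ℝ) - x ^ s * x ^ t * x ^ 4 ≠ 0 := by
      have := hne (s + t + 3)
      rwa [show x ^ (s + t + 3 + 1) = x ^ s * x ^ t * x ^ 4 by ring] at this
    simp only [hX, hR, hg, pow_add, pow_one]
    field_simp
    ring
  rw [inner]
  simp only [hX, hR, hg, pow_add, pow_one]
  field_simp
  ring
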